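/- Let k be a field and d, n ≥ 1 integers. In the multivariate power series ring P := k[[x₁,…,x_n]], let V (the d-th Veronese subring) be the k-subalgebra consisting of all power series whose support contains only monomials of total degree divisible by d, and let A ⊆ V be the k-subalgebra consisting of all power series whose support contains only monomials x^ν with every exponent ν_i divisible by d (so A = k[[x₁^d,…,x_n^d]]). Then V is a free A-module with basis the monomials { x₁^{ν₁}⋯x_n^{ν_n} : 0 ≤ ν_i ≤ d−1 for all i, and d divides ν₁+⋯+ν_n }. -/

import Mathlib

open MvPowerSeries

/-- The subalgebra `A = k[[x₁^d, …, x_n^d]]` of power series supported on monomials all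
of whose exponents are divisible by `d`. -/
noncomputable def dPowerSub (k : Type*) [Field k] (d n : ℕ) :
    Subalgebra k (MvPowerSeries (Fin n) k) where
  carrier := { F | ∀ ν : Fin n →₀ ℕ, ¬ (∀ i, d ∣ ν i) → MvPowerSeries.coeff ν F = 0 }
  zero_mem' := by intro ν _; simp
  add_mem' := by
    intro a b ha hb ν hν
    rw [map_add, ha ν hν, hb ν hν, add_zero]
  one_mem' := by
    intro ν hν
    rw [MvPowerSeries.coeff_one, if_neg]
    rintro rfl
    exact hν fun i => by simp
  mul_mem' := by
    intro a b ha hb ν hν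
    classical
    rw [MvPowerSeries.coeff_mul]
    apply Finset.sum_eq_zero
    rintro ⟨ν₁, ν₂⟩ hmem
    rw [Finset.HasAntidiagonal.mem_antidiagonal] at hmem
    by_cases h1 : ∀ i, d ∣ ν₁ i
    · have h2 : ¬ ∀ i, d ∣ ν₂ i := by
        intro h2
        exact hν fun i => by
          have : ν i = ν₁ i + ν₂ i := by rw [← hmem]; rfl
          rw [this]; exact dvd_add (h1 i) (h2 i)
      rw [hb ν₂ h2, mul_zero]
    · rw [ha ν₁ h1, zero_mul]
  algebraMap_mem' := by
    intro r ν hν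
    have : (algebraMap k (MvPowerSeries (Fin n) k) r) = MvPowerSeries.C (σ := Fin n) (R := k) r := rfl
    rw [this, MvPowerSeries.coeff_C, if_neg]
    rintro rfl
    exact hν fun i => by simp

/-- The `d`-th Veronese `V`, the power series supported on monomials of total degree
divisible by `d`, as a module over `A = dPowerSub k d n`. -/
noncomputable def veroneseMod (k : Type*) [Field k] (d n : ℕ) :
    Submodule ↥(dPowerSub k d n) (MvPowerSeries (Fin n) k) where
  carrier := { F | ∀ ν : Fin n →₀ ℕ, ¬ (d ∣ ∑ i, ν i) → MvPowerSeries.coeff ν F = 0 }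
  zero_mem' := by intro ν _; simp
  add_mem' := by
    intro a b ha hb ν hν
    rw [map_add, ha ν hν, hb ν hν, add_zero]
  smul_mem' := by
    intro c F hF ν hν
    classical
    have hc : (c • F) = (c : MvPowerSeries (Fin n) k) * F := rfl
    rw [hc, MvPowerSeries.coeff_mul]
    apply Finset.sum_eq_zero
    rintro ⟨ν₁, ν₂⟩ hmem
    rw [Finset.HasAntidiagonal.mem_antidiagonal] at hmem
    by_cases h1 : ∀ i, d ∣ ν₁ i
    · have h2 : ¬ d ∣ ∑ i, ν₂ i := by
        intro h2
        apply hν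
        have : ∑ i, ν i = (∑ i, ν₁ i) + ∑ i, ν₂ i := by
          rw [← hmem]
          rw [← Finset.sum_add_distrib]
          rfl
        rw [this]
        exact dvd_add (Finset.dvd_sum fun i _ => h1 i) h2
      rw [hF ν₂ h2, mul_zero]
    · rw [c.2 ν₁ h1, zero_mul]

lemma aux_mod {d a m : ℕ} (ha : a < d) (hle : a ≤ m) (hdvd : d ∣ m - a) : a = m % d := by
  obtain ⟨e, he⟩ := hdvd
  have hm : m = d * e + a := by omega
  subst hm
  rw [Nat.mul_add_mod, Nat.mod_eq_of_lt ha]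

lemma key_coeff (k : Type*) [Field k] {d n : ℕ} (hd : 1 ≤ d)
    {a : MvPowerSeries (Fin n) k} (ha : a ∈ dPowerSub k d n)
    {ρ ρ₀ : Fin n →₀ ℕ} (hρ : ∀ i, ρ i ≤ d - 1) (hρ₀ : ∀ i, ρ₀ i ≤ d - 1)
    {μ : Fin n →₀ ℕ} (hμ : ∀ i, d ∣ μ i) :
    MvPowerSeries.coeff (μ + ρ₀) (a * MvPowerSeries.monomial ρ 1)
      = if ρ = ρ₀ then MvPowerSeries.coeff μ a else 0 := by
  classical
  rw [MvPowerSeries.coeff_mul_monomial]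
  by_cases h : ρ = ρ₀
  · subst h
    rw [if_pos le_add_self, add_tsub_cancel_right, mul_one, if_pos rfl]
  · rw [if_neg h]
    by_cases hle : ρ ≤ μ + ρ₀
    · rw [if_pos hle, mul_one]
      apply ha
      intro hall
      apply h
      ext i
      have h1 : ρ i ≤ μ i + ρ₀ i := by
        have := Finsupp.le_def.mp hle i
        rwa [Finsupp.add_apply] at this
      have h2 : d ∣ μ i + ρ₀ i - ρ i := by
        have := hall i
        rwa [Finsupp.tsub_apply, Finsupp.add_apply] at this
      have h3 : ρ i = (μ i + ρ₀ i) % d := aux_mod (by have := hρ i; omega) h1 h2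
      obtain ⟨c, hc⟩ := hμ i
      have h4 : (μ i + ρ₀ i) % d = ρ₀ i := by
        rw [hc, Nat.mul_add_mod, Nat.mod_eq_of_lt (by have := hρ₀ i; omega)]
      rw [h3, h4]
    · rw [if_neg hle]

/-- **The Veronese subring is free over `k[[x₁^d,…,x_n^d]]`** with basis the monomials
`x^ν` with all `νᵢ ≤ d−1` and `d ∣ ν₁+⋯+ν_n`: the family is `A`-linearly independent and
`A`-spans `V`. -/
theorem veronese_free_over_dPower
    (k : Type*) [Field k] (d n : ℕ) (hd : 1 ≤ d) (hn : 1 ≤ n) :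
    LinearIndependent ↥(dPowerSub k d n)
      (fun ν : { ν : Fin n →₀ ℕ // (∀ i, ν i ≤ d - 1) ∧ d ∣ ∑ i, ν i } =>
        MvPowerSeries.monomial ν.1 (1 : k)) ∧
    Submodule.span ↥(dPowerSub k d n)
        (Set.range (fun ν : { ν : Fin n →₀ ℕ // (∀ i, ν i ≤ d - 1) ∧ d ∣ ∑ i, ν i } =>
          MvPowerSeries.monomial ν.1 (1 : k))) = veroneseMod k d n := by
  classical
  constructor
  · rw [linearIndependent_iff']
    intro s g hsum ρ₀ hρ₀
    apply Subtype.ext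
    apply MvPowerSeries.ext
    intro μ
    rw [ZeroMemClass.coe_zero, map_zero]
    by_cases hμ : ∀ i, d ∣ μ i
    · have hco := congrArg (MvPowerSeries.coeff (μ + ρ₀.1)) hsum
      rw [map_sum, map_zero] at hco
      have heach : ∀ ρ ∈ s,
          MvPowerSeries.coeff (μ + ρ₀.1) (g ρ • MvPowerSeries.monomial ρ.1 (1 : k))
            = if ρ = ρ₀ then MvPowerSeries.coeff μ (g ρ : MvPowerSeries (Fin n) k) else 0 := by
        intro ρ _
        have hs : (g ρ • MvPowerSeries.monomial ρ.1 (1 : k) : MvPowerSeries (Fin n) k)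
            = (g ρ : MvPowerSeries (Fin n) k) * MvPowerSeries.monomial ρ.1 1 := rfl
        rw [hs, key_coeff k hd (g ρ).2 ρ.2.1 ρ₀.2.1 hμ]
        simp [Subtype.ext_iff]
      rw [Finset.sum_congr rfl heach, Finset.sum_ite_eq' s ρ₀, if_pos hρ₀] at hco
      exact hco
    · exact (g ρ₀).2 μ hμ
  · apply le_antisymm
    · rw [Submodule.span_le]
      rintro _ ⟨ρ, rfl⟩
      intro ν hν
      rw [MvPowerSeries.coeff_monomial, if_neg]
      rintro rfl
      exact hν ρ.2.2
    · intro F hF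
      haveI hfin : Finite { ν : Fin n →₀ ℕ // (∀ i, ν i ≤ d - 1) ∧ d ∣ ∑ i, ν i } := by
        apply Finite.of_injective
          (fun ρ : { ν : Fin n →₀ ℕ // (∀ i, ν i ≤ d - 1) ∧ d ∣ ∑ i, ν i } =>
            (fun i => (⟨ρ.1 i, by have := ρ.2.1 i; omega⟩ : Fin d)))
        intro ρ ρ' h
        apply Subtype.ext
        ext i
        exact congrArg Fin.val (congrFun h i)
      haveI := Fintype.ofFinite { ν : Fin n →₀ ℕ // (∀ i, ν i ≤ d - 1) ∧ d ∣ ∑ i, ν i }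
      set a : { ν : Fin n →₀ ℕ // (∀ i, ν i ≤ d - 1) ∧ d ∣ ∑ i, ν i } → ↥(dPowerSub k d n) :=
        fun ρ => ⟨(fun μ => if ∀ i, d ∣ μ i then MvPowerSeries.coeff (μ + ρ.1) F else 0 :
            MvPowerSeries (Fin n) k),
          by
            intro μ hμ
            show (if ∀ i, d ∣ μ i then MvPowerSeries.coeff (μ + ρ.1) F else 0) = 0
            exact if_neg hμ⟩ with hadef
      have hFeq : F = ∑ ρ : { ν : Fin n →₀ ℕ // (∀ i, ν i ≤ d - 1) ∧ d ∣ ∑ i, ν i },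
          a ρ • MvPowerSeries.monomial ρ.1 (1 : k) := by
        apply MvPowerSeries.ext
        intro ν
        rw [map_sum]
        have heach : ∀ ρ : { ν : Fin n →₀ ℕ // (∀ i, ν i ≤ d - 1) ∧ d ∣ ∑ i, ν i },
            MvPowerSeries.coeff ν (a ρ • MvPowerSeries.monomial ρ.1 (1 : k))
              = if ρ.1 ≤ ν ∧ ∀ i, d ∣ (ν - ρ.1) i then MvPowerSeries.coeff ν F else 0 := by
          intro ρ
          have hs : (a ρ • MvPowerSeries.monomial ρ.1 (1 : k) : MvPowerSeries (Fin n) k)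
              = (a ρ : MvPowerSeries (Fin n) k) * MvPowerSeries.monomial ρ.1 1 := rfl
          rw [hs, MvPowerSeries.coeff_mul_monomial]
          by_cases h1 : ρ.1 ≤ ν
          · rw [if_pos h1, mul_one]
            have hc : MvPowerSeries.coeff (ν - ρ.1) (a ρ : MvPowerSeries (Fin n) k)
                = if ∀ i, d ∣ (ν - ρ.1) i
                    then MvPowerSeries.coeff ((ν - ρ.1) + ρ.1) F else 0 := rfl
            rw [hc, tsub_add_cancel_of_le h1]
            by_cases h2 : ∀ i, d ∣ (ν - ρ.1) i
            · rw [if_pos h2, if_pos ⟨h1, h2⟩]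
            · rw [if_neg h2, if_neg (by rintro ⟨-, h⟩; exact h2 h)]
          · rw [if_neg h1, if_neg (by rintro ⟨h, -⟩; exact h1 h)]
        rw [Finset.sum_congr rfl (fun ρ _ => heach ρ)]
        by_cases hν : d ∣ ∑ i, ν i
        · set ρs : Fin n →₀ ℕ := Finsupp.mapRange (· % d) (Nat.zero_mod d) ν with hρsdef
          have hρsi : ∀ i, ρs i = ν i % d := fun i => by
            rw [hρsdef]; exact Finsupp.mapRange_apply
          have hρs1 : ∀ i, ρs i ≤ d - 1 := fun i => by
            rw [hρsi i]
            have := Nat.mod_lt (ν i) (show 0 < d by omega)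
            omega
          have hρsle : ρs ≤ ν := Finsupp.le_def.mpr fun i => by
            rw [hρsi i]; exact Nat.mod_le _ _
          have hρs2 : ∀ i, d ∣ (ν - ρs) i := fun i => by
            rw [Finsupp.tsub_apply, hρsi i]
            exact ⟨ν i / d, by have := Nat.div_add_mod (ν i) d; omega⟩
          have hρs3 : d ∣ ∑ i, ρs i := by
            have hsum : ∑ i, ν i = (∑ i, ρs i) + ∑ i, (ν - ρs) i := by
              rw [← Finset.sum_add_distrib]
              apply Finset.sum_congr rfl
              intro i _
              rw [Finsupp.tsub_apply]
              have : ρs i ≤ ν i := Finsupp.le_def.mp hρsle i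
              omega
            have hd2 : d ∣ ∑ i, (ν - ρs) i := Finset.dvd_sum fun i _ => hρs2 i
            obtain ⟨c1, h1⟩ := hν
            obtain ⟨c2, h2⟩ := hd2
            exact ⟨c1 - c2, by rw [Nat.mul_sub]; omega⟩
          rw [Finset.sum_eq_single_of_mem
              (⟨ρs, hρs1, hρs3⟩ : { ν : Fin n →₀ ℕ // (∀ i, ν i ≤ d - 1) ∧ d ∣ ∑ i, ν i })
              (Finset.mem_univ _)]
          · rw [if_pos ⟨hρsle, hρs2⟩]
          · intro ρ _ hne
            rw [if_neg]
            rintro ⟨h1, h2⟩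
            apply hne
            apply Subtype.ext
            ext i
            have hle : ρ.1 i ≤ ν i := Finsupp.le_def.mp h1 i
            have hdd : d ∣ ν i - ρ.1 i := by
              have := h2 i
              rwa [Finsupp.tsub_apply] at this
            have hmod := aux_mod (show ρ.1 i < d by have := ρ.2.1 i; omega) hle hdd
            show ρ.1 i = ρs i
            rw [hmod, hρsi i]
        · rw [hF ν hν]
          symm
          apply Finset.sum_eq_zero
          intro ρ _
          split <;> rfl
      rw [hFeq]
      exact Submodule.sum_mem _ fun ρ _ =>
        Submodule.smul_mem _ _ (Submodule.subset_span ⟨ρ, rfl⟩)
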